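/- Let n > 3. The Poisson algebra P₀ⁿ degenerates to the Poisson algebra P₁,₄ⁿ: there exists a family g(t), t ∈ ℂ∖{0}, of invertible linear maps of ℂⁿ such that for all x, y ∈ ℂⁿ, g(t)(μ(g(t)⁻¹x, g(t)⁻¹y)) → λ(x,y) and g(t)(μ'(g(t)⁻¹x, g(t)⁻¹y)) → λ'(x,y) as t → 0 (in the standard topology of ℂⁿ), where (μ, μ') are the multiplication and bracket of P₀ⁿ and (λ, λ') those of P₁,₄ⁿ. -/

import Mathlib

open scoped BigOperators

/-- The bilinear map on `Fin n → ℂ` determined by structure constants `c`. -/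
noncomputable def sb {n : ℕ} (c : Fin n → Fin n → Fin n → ℂ) :
    (Fin n → ℂ) →ₗ[ℂ] (Fin n → ℂ) →ₗ[ℂ] (Fin n → ℂ) :=
  LinearMap.mk₂ ℂ (fun x y k => ∑ a, ∑ b, c a b k * (x a * y b))
    (fun x x' y => by
      funext k
      simp [add_mul, mul_add, Finset.sum_add_distrib])
    (fun r x y => by
      funext k
      simp only [Pi.smul_apply, smul_eq_mul, Finset.mul_sum]
      exact Finset.sum_congr rfl fun a _ => Finset.sum_congr rfl fun b _ => by ring)
    (fun x y y' => by
      funext k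
      simp [mul_add, Finset.sum_add_distrib])
    (fun r x y => by
      funext k
      simp only [Pi.smul_apply, smul_eq_mul, Finset.mul_sum]
      exact Finset.sum_congr rfl fun a _ => Finset.sum_congr rfl fun b _ => by ring)

/-- Multiplication of `P₀ⁿ`: `e_i · e_j = e_{i+j}` for `2 ≤ i+j ≤ n`. -/
noncomputable def mu0 (n : ℕ) : (Fin n → ℂ) →ₗ[ℂ] (Fin n → ℂ) →ₗ[ℂ] (Fin n → ℂ) :=
  sb (fun a b k => if (a : ℕ) + (b : ℕ) + 1 = (k : ℕ) then 1 else 0)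

/-- Multiplication of `P₁,₄ⁿ`: `e_i · e_j = e_{i+j}` for `2 ≤ i+j ≤ n−1`,
`i,j ≤ n−1`, together with `eₙ·eₙ = e_{n−1}`. -/
noncomputable def mu12 (n : ℕ) : (Fin n → ℂ) →ₗ[ℂ] (Fin n → ℂ) →ₗ[ℂ] (Fin n → ℂ) :=
  sb (fun a b k =>
    (if (a : ℕ) + (b : ℕ) + 1 = (k : ℕ) ∧ (k : ℕ) + 2 ≤ n then 1 else 0) +
    (if (a : ℕ) + 1 = n ∧ (b : ℕ) + 1 = n ∧ (k : ℕ) + 2 = n then 1 else 0))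


lemma sb_apply {n : ℕ} (c : Fin n → Fin n → Fin n → ℂ) (x y : Fin n → ℂ) (k : Fin n) :
    sb c x y k = ∑ a, ∑ b, c a b k * (x a * y b) := rfl


/-- the degeneration linear map -/
noncomputable def hfun (m : ℕ) (t : ℂ) : (Fin (m+1) → ℂ) →ₗ[ℂ] (Fin (m+1) → ℂ) where
  toFun x := fun j => (if (j:ℕ) = m then 0 else t^(2*(j:ℕ)+2) * x j)
      + Complex.I * t^m * x (Fin.last m)
  map_add' x y := by
    funext j
    simp only [Pi.add_apply]
    split_ifs <;> ring
  map_smul' r x := by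
    funext j
    simp only [Pi.smul_apply, smul_eq_mul, RingHom.id_apply]
    split_ifs <;> ring

noncomputable def hinv (m : ℕ) (t : ℂ) : (Fin (m+1) → ℂ) →ₗ[ℂ] (Fin (m+1) → ℂ) where
  toFun y := fun j => if (j:ℕ) = m then y (Fin.last m) / (Complex.I * t^m)
      else (y j - y (Fin.last m)) / t^(2*(j:ℕ)+2)
  map_add' x y := by
    funext j
    simp only [Pi.add_apply]
    split_ifs <;> ring
  map_smul' r x := by
    funext j
    simp only [Pi.smul_apply, smul_eq_mul, RingHom.id_apply]
    split_ifs <;> ring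

lemma hfun_apply (m : ℕ) (t : ℂ) (x : Fin (m+1) → ℂ) (j : Fin (m+1)) :
    hfun m t x j = (if (j:ℕ) = m then 0 else t^(2*(j:ℕ)+2) * x j)
      + Complex.I * t^m * x (Fin.last m) := rfl

lemma hinv_hfun (m : ℕ) (t : ℂ) (ht : t ≠ 0) (x : Fin (m+1) → ℂ) :
    hinv m t (hfun m t x) = x := by
  have hI : Complex.I * t^m ≠ 0 := mul_ne_zero Complex.I_ne_zero (pow_ne_zero _ ht)
  funext j
  show (if (j:ℕ) = m then (hfun m t x) (Fin.last m) / (Complex.I * t^m)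
      else ((hfun m t x) j - (hfun m t x) (Fin.last m)) / t^(2*(j:ℕ)+2)) = x j
  have hlast : hfun m t x (Fin.last m) = Complex.I * t^m * x (Fin.last m) := by
    rw [hfun_apply, if_pos (Fin.val_last m), zero_add]
  by_cases hj : (j:ℕ) = m
  · have hjl : j = Fin.last m := Fin.ext (by rw [hj, Fin.val_last])
    rw [if_pos hj, hlast, hjl]
    field_simp
  · have hp : t^(2*(j:ℕ)+2) ≠ 0 := pow_ne_zero _ ht
    rw [if_neg hj, hlast, hfun_apply, if_neg hj]
    field_simp
    ring

lemma hfun_hinv (m : ℕ) (t : ℂ) (ht : t ≠ 0) (y : Fin (m+1) → ℂ) :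
    hfun m t (hinv m t y) = y := by
  have hI : Complex.I * t^m ≠ 0 := mul_ne_zero Complex.I_ne_zero (pow_ne_zero _ ht)
  funext j
  have hlastv : hinv m t y (Fin.last m) = y (Fin.last m) / (Complex.I * t^m) := by
    show (if ((Fin.last m : Fin (m+1)):ℕ) = m then _ else _) = _
    rw [if_pos (Fin.val_last m)]
  rw [hfun_apply, hlastv]
  by_cases hj : (j:ℕ) = m
  · have hjl : j = Fin.last m := Fin.ext (by rw [hj, Fin.val_last])
    rw [if_pos hj, zero_add, hjl]
    field_simp
  · have hp : t^(2*(j:ℕ)+2) ≠ 0 := pow_ne_zero _ ht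
    have hjv : hinv m t y j = (y j - y (Fin.last m)) / t^(2*(j:ℕ)+2) := by
      show (if (j:ℕ) = m then _ else _) = _
      rw [if_neg hj]
    rw [if_neg hj, hjv]
    field_simp
    ring

/-- the family of linear equivalences -/
noncomputable def gfam (m : ℕ) (t : ℂ) : (Fin (m+1) → ℂ) ≃ₗ[ℂ] (Fin (m+1) → ℂ) :=
  if ht : t = 0 then LinearEquiv.refl ℂ _ else
  LinearEquiv.ofLinear (hinv m t) (hfun m t)
    (LinearMap.ext fun x => by
      rw [LinearMap.comp_apply, LinearMap.id_apply, hinv_hfun m t ht])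
    (LinearMap.ext fun y => by
      rw [LinearMap.comp_apply, LinearMap.id_apply, hfun_hinv m t ht])

lemma gfam_symm_apply (m : ℕ) (t : ℂ) (ht : t ≠ 0) (x : Fin (m+1) → ℂ) :
    (gfam m t).symm x = hfun m t x := by
  rw [gfam, dif_neg ht, LinearEquiv.ofLinear_symm_apply]

lemma gfam_hfun (m : ℕ) (t : ℂ) (ht : t ≠ 0) (x : Fin (m+1) → ℂ) :
    gfam m t (hfun m t x) = x := by
  rw [gfam, dif_neg ht, LinearEquiv.ofLinear_apply, hinv_hfun m t ht]

/-- coefficients of the interpolating structure constants -/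
noncomputable def coefC (m : ℕ) (a b k : Fin (m+1)) : ℂ :=
  if (a:ℕ) = m then
    (if (b:ℕ) = m then (if (k:ℕ) = m then Complex.I * m else (m:ℂ) - (k:ℕ))
     else (if (k:ℕ) ≤ (b:ℕ) then -Complex.I else if (k:ℕ) = m then 1 else 0))
  else if (b:ℕ) = m then (if (k:ℕ) ≤ (a:ℕ) then -Complex.I else if (k:ℕ) = m then 1 else 0)
  else if (a:ℕ)+(b:ℕ)+2 ≤ m then (if (k:ℕ) = (a:ℕ)+(b:ℕ)+1 then 1 else 0)
  else if (a:ℕ)+(b:ℕ)+1 = m then (if (k:ℕ) = m then -Complex.I else -1)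
  else 0

def expoC (m : ℕ) (a b k : Fin (m+1)) : ℕ :=
  if (a:ℕ) = m then
    (if (b:ℕ) = m then (if (k:ℕ) = m then m else 2*m - 2*(k:ℕ) - 2)
     else (if (k:ℕ) ≤ (b:ℕ) then m + 2*(b:ℕ) - 2*(k:ℕ) else 2*(b:ℕ)+2))
  else if (b:ℕ) = m then (if (k:ℕ) ≤ (a:ℕ) then m + 2*(a:ℕ) - 2*(k:ℕ) else 2*(a:ℕ)+2)
  else if (a:ℕ)+(b:ℕ)+2 ≤ m then 0
  else if (a:ℕ)+(b:ℕ)+1 = m then (if (k:ℕ) = m then m+2 else 2*m - 2*(k:ℕ))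
  else 0

noncomputable def CC (m : ℕ) (t : ℂ) (a b k : Fin (m+1)) : ℂ :=
  coefC m a b k * t ^ (expoC m a b k)
lemma sum_indicator_shift (m B K : ℕ) (hK : K ≤ m) :
    (∑ i : Fin (m+1), if (i:ℕ) + B + 1 = K then (1:ℂ) else 0)
      = if B + 1 ≤ K then 1 else 0 := by
  by_cases hBK : B + 1 ≤ K
  · rw [if_pos hBK]
    rw [Finset.sum_eq_single (⟨K - B - 1, by omega⟩ : Fin (m+1))]
    · rw [if_pos (by simp; omega)]
    · intro i _ hne
      rw [if_neg]
      intro h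
      exact hne (Fin.ext (by simp; omega))
    · intro h
      exact absurd (Finset.mem_univ _) h
  · rw [if_neg hBK]
    apply Finset.sum_eq_zero
    intro i _
    rw [if_neg (by omega)]

lemma sum_indicator_lt (m K : ℕ) (hK : K ≤ m) :
    (∑ i : Fin (m+1), if (i:ℕ) + 1 ≤ K then (1:ℂ) else 0) = (K : ℂ) := by
  rw [Fin.sum_univ_eq_sum_range (fun i => if i + 1 ≤ K then (1:ℂ) else 0) (m+1)]
  rw [Finset.sum_boole]
  congr 1
  have h : (Finset.range (m+1)).filter (fun i => i + 1 ≤ K) = Finset.range K := by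
    ext i
    simp only [Finset.mem_filter, Finset.mem_range]
    omega
  rw [h, Finset.card_range]

lemma sb_single_single {n : ℕ} (c : Fin n → Fin n → Fin n → ℂ) (a b : Fin n) (α β : ℂ) :
    sb c (Pi.single a α) (Pi.single b β) = fun k => c a b k * (α * β) := by
  funext k
  rw [sb_apply]
  simp [Pi.single_apply, mul_ite, ite_mul, mul_zero, zero_mul, Finset.sum_ite_eq, Finset.sum_ite_eq']

lemma fin_sum_shift (m : ℕ) (i k : Fin (m+1)) :
    (∑ j : Fin (m+1), if (i:ℕ)+(j:ℕ)+1 = (k:ℕ) then (1:ℂ) else 0)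
      = if (i:ℕ) + 1 ≤ (k:ℕ) then 1 else 0 := by
  have h3 : ∀ j : Fin (m+1), ((if (i:ℕ)+(j:ℕ)+1 = (k:ℕ) then (1:ℂ) else 0))
      = (if (j:ℕ)+(i:ℕ)+1 = (k:ℕ) then (1:ℂ) else 0) := by
    intro j
    congr 1
    simp only [eq_iff_iff]; omega
  rw [Finset.sum_congr rfl (fun j _ => h3 j), sum_indicator_shift m (i:ℕ) (k:ℕ) (by omega)]

lemma mu0_cs (m : ℕ) (b : Fin (m+1)) (γ β : ℂ) :
    mu0 (m+1) (fun _ => γ) (Pi.single b β)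
      = fun k : Fin (m+1) => (if (b:ℕ) + 1 ≤ (k:ℕ) then (1:ℂ) else 0) * (γ * β) := by
  funext k
  simp only [mu0]
  rw [sb_apply]
  have h1 : ∀ i : Fin (m+1),
      (∑ j : Fin (m+1), (if (i:ℕ)+(j:ℕ)+1 = (k:ℕ) then (1:ℂ) else 0) * (γ * (Pi.single b β : Fin (m+1) → ℂ) j))
        = (if (i:ℕ)+(b:ℕ)+1 = (k:ℕ) then (1:ℂ) else 0) * (γ * β) := by
    intro i
    simp [Pi.single_apply, mul_ite, ite_mul, mul_zero, zero_mul, Finset.sum_ite_eq, Finset.sum_ite_eq']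
  rw [Finset.sum_congr rfl (fun i _ => h1 i), ← Finset.sum_mul,
    sum_indicator_shift m (b:ℕ) (k:ℕ) (by omega)]

lemma mu0_sc (m : ℕ) (a : Fin (m+1)) (α γ : ℂ) :
    mu0 (m+1) (Pi.single a α) (fun _ => γ)
      = fun k : Fin (m+1) => (if (a:ℕ) + 1 ≤ (k:ℕ) then (1:ℂ) else 0) * (α * γ) := by
  funext k
  simp only [mu0]
  rw [sb_apply]
  have h1 : ∀ i : Fin (m+1),
      (∑ j : Fin (m+1), (if (i:ℕ)+(j:ℕ)+1 = (k:ℕ) then (1:ℂ) else 0) * ((Pi.single a α : Fin (m+1) → ℂ) i * γ))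
        = (Pi.single a α : Fin (m+1) → ℂ) i * ((if (i:ℕ)+1 ≤ (k:ℕ) then (1:ℂ) else 0) * γ) := by
    intro i
    rw [← Finset.sum_mul, fin_sum_shift m i k]
    ring
  rw [Finset.sum_congr rfl (fun i _ => h1 i)]
  rw [Finset.sum_eq_single a]
  · rw [Pi.single_eq_same]; ring
  · intro i _ hne
    rw [Pi.single_eq_of_ne hne, zero_mul]
  · intro h; exact absurd (Finset.mem_univ _) h

lemma mu0_cc (m : ℕ) (γ δ : ℂ) :
    mu0 (m+1) (fun _ => γ) (fun _ => δ)
      = fun k : Fin (m+1) => ((k:ℕ) : ℂ) * (γ * δ) := by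
  funext k
  simp only [mu0]
  rw [sb_apply]
  have h1 : ∀ i : Fin (m+1),
      (∑ j : Fin (m+1), (if (i:ℕ)+(j:ℕ)+1 = (k:ℕ) then (1:ℂ) else 0) * (γ * δ))
        = (if (i:ℕ)+1 ≤ (k:ℕ) then (1:ℂ) else 0) * (γ * δ) := by
    intro i
    rw [← Finset.sum_mul, fin_sum_shift m i k]
  rw [Finset.sum_congr rfl (fun i _ => h1 i), ← Finset.sum_mul,
    sum_indicator_lt m (k:ℕ) (by omega)]
lemma hfun_single_ne (m : ℕ) (t : ℂ) (a : Fin (m+1)) (ha : (a:ℕ) ≠ m) (α : ℂ) :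
    hfun m t (Pi.single a α) = Pi.single a (t^(2*(a:ℕ)+2) * α) := by
  funext j
  rw [hfun_apply]
  have hla : Fin.last m ≠ a := by
    intro h
    exact ha ((congrArg Fin.val h).symm.trans (Fin.val_last m))
  rw [Pi.single_eq_of_ne hla, mul_zero, add_zero]
  by_cases hj : (j:ℕ) = m
  · rw [if_pos hj, Pi.single_eq_of_ne (fun h => ha (by rw [← h]; exact hj))]
  · rw [if_neg hj, Pi.single_apply, Pi.single_apply]
    by_cases hja : j = a
    · rw [if_pos hja, if_pos hja, hja]
    · rw [if_neg hja, if_neg hja, mul_zero]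

lemma hfun_single_last (m : ℕ) (t : ℂ) (α : ℂ) :
    hfun m t (Pi.single (Fin.last m) α) = fun _ => Complex.I * t^m * α := by
  funext j
  rw [hfun_apply, Pi.single_eq_same]
  by_cases hj : (j:ℕ) = m
  · rw [if_pos hj, zero_add]
  · rw [if_neg hj, Pi.single_eq_of_ne, mul_zero, zero_add]
    intro h
    exact hj ((congrArg Fin.val h).trans (Fin.val_last m))

lemma CC_zero (m : ℕ) (hm : 3 ≤ m) (a b k : Fin (m+1)) :
    CC m 0 a b k =
      (if (a:ℕ)+(b:ℕ)+1 = (k:ℕ) ∧ (k:ℕ)+2 ≤ m+1 then (1:ℂ) else 0) +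
      (if (a:ℕ)+1 = m+1 ∧ (b:ℕ)+1 = m+1 ∧ (k:ℕ)+2 = m+1 then (1:ℂ) else 0) := by
  have hk : (k:ℕ) < m+1 := k.isLt
  have hb : (b:ℕ) < m+1 := b.isLt
  have ha : (a:ℕ) < m+1 := a.isLt
  unfold CC coefC expoC
  by_cases h1 : (a:ℕ) = m <;> by_cases h2 : (b:ℕ) = m
  · -- both last
    simp only [if_pos h1, if_pos h2]
    by_cases h3 : (k:ℕ) = m
    · rw [if_pos h3, if_pos h3, zero_pow (show m ≠ 0 by omega), mul_zero,
        if_neg (show ¬((a:ℕ)+(b:ℕ)+1 = (k:ℕ) ∧ (k:ℕ)+2 ≤ m+1) by omega),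
        if_neg (show ¬((a:ℕ)+1 = m+1 ∧ (b:ℕ)+1 = m+1 ∧ (k:ℕ)+2 = m+1) by omega)]
      ring
    · rw [if_neg h3, if_neg h3,
        if_neg (show ¬((a:ℕ)+(b:ℕ)+1 = (k:ℕ) ∧ (k:ℕ)+2 ≤ m+1) by omega)]
      by_cases h4 : (k:ℕ) = m - 1
      · rw [show 2*m - 2*(k:ℕ) - 2 = 0 by omega, pow_zero, mul_one,
          if_pos (show (a:ℕ)+1 = m+1 ∧ (b:ℕ)+1 = m+1 ∧ (k:ℕ)+2 = m+1 by omega)]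
        have hc : ((k:ℕ) : ℂ) + 1 = (m : ℂ) := by
          exact_mod_cast congrArg (Nat.cast : ℕ → ℂ) (show (k:ℕ) + 1 = m by omega)
        rw [zero_add]
        linear_combination -hc
      · rw [zero_pow (show 2*m - 2*(k:ℕ) - 2 ≠ 0 by omega), mul_zero,
          if_neg (show ¬((a:ℕ)+1 = m+1 ∧ (b:ℕ)+1 = m+1 ∧ (k:ℕ)+2 = m+1) by omega)]
        ring
  · -- a last, b not
    simp only [if_pos h1, if_neg h2]
    rw [if_neg (show ¬((a:ℕ)+(b:ℕ)+1 = (k:ℕ) ∧ (k:ℕ)+2 ≤ m+1) by omega),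
      if_neg (show ¬((a:ℕ)+1 = m+1 ∧ (b:ℕ)+1 = m+1 ∧ (k:ℕ)+2 = m+1) by omega)]
    by_cases h3 : (k:ℕ) ≤ (b:ℕ)
    · rw [if_pos h3, if_pos h3, zero_pow (show m + 2*(b:ℕ) - 2*(k:ℕ) ≠ 0 by omega), mul_zero]
      ring
    · rw [if_neg h3, if_neg h3, zero_pow (show 2*(b:ℕ)+2 ≠ 0 by omega), mul_zero]
      ring
  · -- b last, a not
    simp only [if_neg h1, if_pos h2]
    rw [if_neg (show ¬((a:ℕ)+(b:ℕ)+1 = (k:ℕ) ∧ (k:ℕ)+2 ≤ m+1) by omega),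
      if_neg (show ¬((a:ℕ)+1 = m+1 ∧ (b:ℕ)+1 = m+1 ∧ (k:ℕ)+2 = m+1) by omega)]
    by_cases h3 : (k:ℕ) ≤ (a:ℕ)
    · rw [if_pos h3, if_pos h3, zero_pow (show m + 2*(a:ℕ) - 2*(k:ℕ) ≠ 0 by omega), mul_zero]
      ring
    · rw [if_neg h3, if_neg h3, zero_pow (show 2*(a:ℕ)+2 ≠ 0 by omega), mul_zero]
      ring
  · -- both small
    simp only [if_neg h1, if_neg h2]
    rw [if_neg (show ¬((a:ℕ)+1 = m+1 ∧ (b:ℕ)+1 = m+1 ∧ (k:ℕ)+2 = m+1) by omega), add_zero]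
    by_cases h3 : (a:ℕ)+(b:ℕ)+2 ≤ m
    · rw [if_pos h3, if_pos h3, pow_zero, mul_one]
      by_cases h4 : (k:ℕ) = (a:ℕ)+(b:ℕ)+1
      · rw [if_pos h4, if_pos (show (a:ℕ)+(b:ℕ)+1 = (k:ℕ) ∧ (k:ℕ)+2 ≤ m+1 by omega)]
      · rw [if_neg h4, if_neg (show ¬((a:ℕ)+(b:ℕ)+1 = (k:ℕ) ∧ (k:ℕ)+2 ≤ m+1) by omega)]
    · rw [if_neg h3, if_neg h3,
        if_neg (show ¬((a:ℕ)+(b:ℕ)+1 = (k:ℕ) ∧ (k:ℕ)+2 ≤ m+1) by omega)]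
      by_cases h5 : (a:ℕ)+(b:ℕ)+1 = m
      · rw [if_pos h5, if_pos h5]
        by_cases h6 : (k:ℕ) = m
        · rw [if_pos h6, if_pos h6, zero_pow (show m+2 ≠ 0 by omega), mul_zero]
        · rw [if_neg h6, if_neg h6, zero_pow (show 2*m - 2*(k:ℕ) ≠ 0 by omega), mul_zero]
      · rw [if_neg h5, if_neg h5, zero_mul]
lemma hfun_single_lastv (m : ℕ) (t : ℂ) (a : Fin (m+1)) (ha : (a:ℕ) = m) (α : ℂ) :
    hfun m t (Pi.single a α) = fun _ => Complex.I * t^m * α := by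
  have haL : a = Fin.last m := Fin.ext (by rw [Fin.val_last]; exact ha)
  rw [haL, hfun_single_last]

/-- key identity, case both indices small -/
lemma key_ss (m : ℕ) (hm : 3 ≤ m) (t : ℂ) (a b : Fin (m+1))
    (ha : (a:ℕ) ≠ m) (hb : (b:ℕ) ≠ m) :
    mu0 (m+1) (hfun m t (Pi.single a 1)) (hfun m t (Pi.single b 1))
      = hfun m t (fun k => CC m t a b k) := by
  have ha' : (a:ℕ) < m := by have := a.isLt; omega
  have hb' : (b:ℕ) < m := by have := b.isLt; omega
  rw [hfun_single_ne m t a ha 1, hfun_single_ne m t b hb 1]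
  simp only [mu0]
  rw [sb_single_single]
  funext j
  have hj' : (j:ℕ) < m + 1 := j.isLt
  rw [hfun_apply]
  simp only [CC, coefC, expoC, if_neg ha, if_neg hb, Fin.val_last, mul_one]
  by_cases h3 : (a:ℕ)+(b:ℕ)+2 ≤ m
  · simp only [if_pos h3, pow_zero, mul_one]
    rw [if_neg (show ¬(m = (a:ℕ)+(b:ℕ)+1) by omega), mul_zero, add_zero]
    by_cases hj : (j:ℕ) = m
    · rw [if_pos hj, if_neg (show ¬((a:ℕ)+(b:ℕ)+1 = (j:ℕ)) by omega), zero_mul]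
    · rw [if_neg hj]
      by_cases h4 : (j:ℕ) = (a:ℕ)+(b:ℕ)+1
      · rw [if_pos h4, if_pos (by omega), mul_one,
          show 2*(j:ℕ)+2 = (2*(a:ℕ)+2) + (2*(b:ℕ)+2) by omega, pow_add]
        ring
      · rw [if_neg h4, if_neg (by omega), mul_zero, zero_mul]
  · simp only [if_neg h3]
    by_cases h5 : (a:ℕ)+(b:ℕ)+1 = m
    · simp only [if_pos h5]
      simp only [if_true]
      have hlast : Complex.I * t^m * (-Complex.I * t^(m+2)) = t^(2*m+2) := by
        have : Complex.I * t^m * (-Complex.I * t^(m+2))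
            = -(Complex.I*Complex.I) * (t^m * t^(m+2)) := by ring
        rw [this, Complex.I_mul_I, ← pow_add]
        ring_nf
      by_cases hj : (j:ℕ) = m
      · rw [if_pos hj, if_pos (show (a:ℕ)+(b:ℕ)+1 = (j:ℕ) by omega), zero_add, hlast,
          one_mul, ← pow_add, show (2*(a:ℕ)+2) + (2*(b:ℕ)+2) = 2*m+2 by omega]
      · rw [if_neg hj, if_neg (show ¬((a:ℕ)+(b:ℕ)+1 = (j:ℕ)) by omega), zero_mul,
          if_neg hj, if_neg hj, hlast]
        have h6 : t^(2*(j:ℕ)+2) * (-1 * t^(2*m - 2*(j:ℕ))) = -t^(2*m+2) := by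
          rw [show t^(2*(j:ℕ)+2) * (-1 * t^(2*m - 2*(j:ℕ)))
              = -(t^(2*(j:ℕ)+2) * t^(2*m - 2*(j:ℕ))) by ring, ← pow_add,
            show 2*(j:ℕ)+2 + (2*m - 2*(j:ℕ)) = 2*m+2 by omega]
        rw [h6]
        ring
    · simp only [if_neg h5, zero_mul, mul_zero, add_zero]
      rw [if_neg (show ¬((a:ℕ)+(b:ℕ)+1 = (j:ℕ)) by omega), zero_mul]
      split_ifs <;> ring

/-- key identity, case first index last, second small -/
lemma key_ls (m : ℕ) (hm : 3 ≤ m) (t : ℂ) (a b : Fin (m+1))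
    (ha : (a:ℕ) = m) (hb : (b:ℕ) ≠ m) :
    mu0 (m+1) (hfun m t (Pi.single a 1)) (hfun m t (Pi.single b 1))
      = hfun m t (fun k => CC m t a b k) := by
  have hb' : (b:ℕ) < m := by have := b.isLt; omega
  rw [hfun_single_lastv m t a ha 1, hfun_single_ne m t b hb 1, mu0_cs]
  funext j
  have hj' : (j:ℕ) < m + 1 := j.isLt
  rw [hfun_apply]
  simp only [CC, coefC, expoC, if_pos ha, if_neg hb, Fin.val_last, mul_one]
  rw [if_neg (show ¬(m ≤ (b:ℕ)) by omega), if_neg (show ¬(m ≤ (b:ℕ)) by omega)]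
  simp only [if_true]
  have hlast : Complex.I * t^m * (1 * t^(2*(b:ℕ)+2)) = Complex.I * t^(m + 2*(b:ℕ)+2) := by
    rw [one_mul, mul_assoc, ← pow_add]
    ring_nf
  by_cases hj : (j:ℕ) = m
  · rw [if_pos hj, if_pos (show (b:ℕ)+1 ≤ (j:ℕ) by omega), zero_add, hlast,
      one_mul, mul_assoc, ← pow_add, show m + (2*(b:ℕ)+2) = m + 2*(b:ℕ)+2 by omega]
  · rw [if_neg hj]
    by_cases h3 : (j:ℕ) ≤ (b:ℕ)
    · rw [if_pos h3, if_pos h3, if_neg (show ¬((b:ℕ)+1 ≤ (j:ℕ)) by omega), zero_mul, hlast]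
      have h6 : t^(2*(j:ℕ)+2) * (-Complex.I * t^(m + 2*(b:ℕ) - 2*(j:ℕ)))
          = -Complex.I * t^(m + 2*(b:ℕ)+2) := by
        rw [show t^(2*(j:ℕ)+2) * (-Complex.I * t^(m + 2*(b:ℕ) - 2*(j:ℕ)))
            = -Complex.I * (t^(2*(j:ℕ)+2) * t^(m + 2*(b:ℕ) - 2*(j:ℕ))) by ring, ← pow_add,
          show 2*(j:ℕ)+2 + (m + 2*(b:ℕ) - 2*(j:ℕ)) = m + 2*(b:ℕ)+2 by omega]
      rw [h6]
      ring
    · rw [if_neg h3, if_neg h3, if_neg (show ¬((j:ℕ) = m) from hj),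
        if_pos (show (b:ℕ)+1 ≤ (j:ℕ) by omega), hlast, zero_mul, mul_zero, zero_add,
        one_mul, mul_assoc, ← pow_add, show m + (2*(b:ℕ)+2) = m + 2*(b:ℕ)+2 by omega]
/-- key identity, case first index small, second last -/
lemma key_sl (m : ℕ) (hm : 3 ≤ m) (t : ℂ) (a b : Fin (m+1))
    (ha : (a:ℕ) ≠ m) (hb : (b:ℕ) = m) :
    mu0 (m+1) (hfun m t (Pi.single a 1)) (hfun m t (Pi.single b 1))
      = hfun m t (fun k => CC m t a b k) := by
  have ha' : (a:ℕ) < m := by have := a.isLt; omega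
  rw [hfun_single_lastv m t b hb 1, hfun_single_ne m t a ha 1, mu0_sc]
  funext j
  have hj' : (j:ℕ) < m + 1 := j.isLt
  rw [hfun_apply]
  simp only [CC, coefC, expoC, if_neg ha, if_pos hb, Fin.val_last, mul_one]
  rw [if_neg (show ¬(m ≤ (a:ℕ)) by omega), if_neg (show ¬(m ≤ (a:ℕ)) by omega)]
  simp only [if_true]
  have hlast : Complex.I * t^m * (1 * t^(2*(a:ℕ)+2)) = Complex.I * t^(m + 2*(a:ℕ)+2) := by
    rw [one_mul, mul_assoc, ← pow_add, show m + (2*(a:ℕ)+2) = m + 2*(a:ℕ)+2 by omega]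
  by_cases hj : (j:ℕ) = m
  · rw [if_pos hj, if_pos (show (a:ℕ)+1 ≤ (j:ℕ) by omega), zero_add, hlast,
      one_mul, mul_comm (t^(2*(a:ℕ)+2)) (Complex.I * t^m), mul_assoc, ← pow_add,
      show m + (2*(a:ℕ)+2) = m + 2*(a:ℕ)+2 by omega]
  · rw [if_neg hj]
    by_cases h3 : (j:ℕ) ≤ (a:ℕ)
    · rw [if_pos h3, if_pos h3, if_neg (show ¬((a:ℕ)+1 ≤ (j:ℕ)) by omega), zero_mul, hlast]
      have h6 : t^(2*(j:ℕ)+2) * (-Complex.I * t^(m + 2*(a:ℕ) - 2*(j:ℕ)))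
          = -Complex.I * t^(m + 2*(a:ℕ)+2) := by
        rw [show t^(2*(j:ℕ)+2) * (-Complex.I * t^(m + 2*(a:ℕ) - 2*(j:ℕ)))
            = -Complex.I * (t^(2*(j:ℕ)+2) * t^(m + 2*(a:ℕ) - 2*(j:ℕ))) by ring, ← pow_add,
          show 2*(j:ℕ)+2 + (m + 2*(a:ℕ) - 2*(j:ℕ)) = m + 2*(a:ℕ)+2 by omega]
      rw [h6]
      ring
    · rw [if_neg h3, if_neg h3, if_neg (show ¬((j:ℕ) = m) from hj),
        if_pos (show (a:ℕ)+1 ≤ (j:ℕ) by omega), hlast, zero_mul, mul_zero, zero_add,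
        one_mul, mul_comm (t^(2*(a:ℕ)+2)) (Complex.I * t^m), mul_assoc, ← pow_add,
        show m + (2*(a:ℕ)+2) = m + 2*(a:ℕ)+2 by omega]

/-- key identity, case both indices last -/
lemma key_ll (m : ℕ) (hm : 3 ≤ m) (t : ℂ) (a b : Fin (m+1))
    (ha : (a:ℕ) = m) (hb : (b:ℕ) = m) :
    mu0 (m+1) (hfun m t (Pi.single a 1)) (hfun m t (Pi.single b 1))
      = hfun m t (fun k => CC m t a b k) := by
  rw [hfun_single_lastv m t a ha 1, hfun_single_lastv m t b hb 1, mu0_cc]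
  funext j
  have hj' : (j:ℕ) < m + 1 := j.isLt
  rw [hfun_apply]
  simp only [CC, coefC, expoC, if_pos ha, if_pos hb, Fin.val_last, mul_one, if_true]
  have hII : Complex.I * t^m * (Complex.I * t^m) = -t^(2*m) := by
    rw [show Complex.I * t^m * (Complex.I * t^m)
        = (Complex.I*Complex.I) * (t^m * t^m) by ring, Complex.I_mul_I, ← pow_add,
      show m + m = 2*m by omega]
    ring
  have hlast : Complex.I * t^m * (Complex.I * (m:ℂ) * t^m) = -(m:ℂ) * t^(2*m) := by
    rw [show Complex.I * t^m * (Complex.I * (m:ℂ) * t^m)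
        = (Complex.I*Complex.I) * ((m:ℂ) * (t^m * t^m)) by ring, Complex.I_mul_I, ← pow_add,
      show m + m = 2*m by omega]
    ring
  rw [hII]
  by_cases hj : (j:ℕ) = m
  · rw [if_pos hj, hj, zero_add, hlast]
    ring
  · rw [if_neg hj, if_neg hj, if_neg hj, hlast]
    
    have h6 : t^(2*(j:ℕ)+2) * (((m:ℂ) - (j:ℕ)) * t^(2*m - 2*(j:ℕ) - 2))
        = ((m:ℂ) - (j:ℕ)) * t^(2*m) := by
      rw [show t^(2*(j:ℕ)+2) * (((m:ℂ) - (j:ℕ)) * t^(2*m - 2*(j:ℕ) - 2))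
          = ((m:ℂ) - (j:ℕ)) * (t^(2*(j:ℕ)+2) * t^(2*m - 2*(j:ℕ) - 2)) by ring, ← pow_add,
        show 2*(j:ℕ)+2 + (2*m - 2*(j:ℕ) - 2) = 2*m by omega]
    rw [h6]
    ring

/-- the key identity as bilinear maps -/
lemma key (m : ℕ) (hm : 3 ≤ m) (t : ℂ) :
    (mu0 (m+1)).compl₁₂ (hfun m t) (hfun m t) = (sb (CC m t)).compr₂ (hfun m t) := by
  apply LinearMap.ext_basis (Pi.basisFun ℂ (Fin (m+1))) (Pi.basisFun ℂ (Fin (m+1)))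
  intro a b
  rw [LinearMap.compl₁₂_apply, LinearMap.compr₂_apply, Pi.basisFun_apply, Pi.basisFun_apply,
    sb_single_single]
  have hCC : (fun k => CC m t a b k * (1*1)) = fun k => CC m t a b k := by
    funext k; ring
  rw [hCC]
  by_cases ha : (a:ℕ) = m <;> by_cases hb : (b:ℕ) = m
  · exact key_ll m hm t a b ha hb
  · exact key_ls m hm t a b ha hb
  · exact key_sl m hm t a b ha hb
  · exact key_ss m hm t a b ha hb

lemma key_applied (m : ℕ) (hm : 3 ≤ m) (t : ℂ) (x y : Fin (m+1) → ℂ) :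
    mu0 (m+1) (hfun m t x) (hfun m t y) = hfun m t (sb (CC m t) x y) := by
  have h := key m hm t
  have h2 := LinearMap.congr_fun (LinearMap.congr_fun h x) y
  rwa [LinearMap.compl₁₂_apply, LinearMap.compr₂_apply] at h2


/-- For n > 3, the Poisson algebra `P₀ⁿ` degenerates to `P₁,₄ⁿ`
(both with zero bracket). -/
theorem stmt17 (n : ℕ) (hn : 3 < n) :
    ∃ g : ℂ → ((Fin n → ℂ) ≃ₗ[ℂ] (Fin n → ℂ)), ∀ x y : Fin n → ℂ,
      Filter.Tendsto (fun t : ℂ => g t (mu0 n ((g t).symm x) ((g t).symm y)))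
        (nhdsWithin (0 : ℂ) {(0 : ℂ)}ᶜ) (nhds (mu12 n x y)) ∧
      Filter.Tendsto (fun t : ℂ =>
          g t ((0 : (Fin n → ℂ) →ₗ[ℂ] (Fin n → ℂ) →ₗ[ℂ] (Fin n → ℂ)) ((g t).symm x) ((g t).symm y)))
        (nhdsWithin (0 : ℂ) {(0 : ℂ)}ᶜ)
        (nhds ((0 : (Fin n → ℂ) →ₗ[ℂ] (Fin n → ℂ) →ₗ[ℂ] (Fin n → ℂ)) x y)) := by
  obtain ⟨m, rfl⟩ : ∃ m, n = m + 1 := ⟨n - 1, by omega⟩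
  have hm : 3 ≤ m := by omega
  refine ⟨gfam m, fun x y => ⟨?_, ?_⟩⟩
  · -- main convergence
    have hev : (fun t : ℂ => gfam m t (mu0 (m+1) ((gfam m t).symm x) ((gfam m t).symm y)))
        =ᶠ[nhdsWithin (0:ℂ) {(0:ℂ)}ᶜ] (fun t => sb (CC m t) x y) := by
      filter_upwards [self_mem_nhdsWithin] with t ht
      have ht' : t ≠ 0 := by simpa using ht
      rw [gfam_symm_apply m t ht', gfam_symm_apply m t ht', key_applied m hm t x y,
        gfam_hfun m t ht']
    rw [Filter.tendsto_congr' hev]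
    have h0 : mu12 (m+1) x y = sb (CC m 0) x y := by
      have hc : (fun a b k : Fin (m+1) =>
          ((if (a:ℕ)+(b:ℕ)+1 = (k:ℕ) ∧ (k:ℕ)+2 ≤ m+1 then (1:ℂ) else 0) +
           (if (a:ℕ)+1 = m+1 ∧ (b:ℕ)+1 = m+1 ∧ (k:ℕ)+2 = m+1 then (1:ℂ) else 0)))
          = CC m 0 := by
        funext a b k
        exact (CC_zero m hm a b k).symm
      rw [mu12, ← hc]
    rw [h0, tendsto_pi_nhds]
    intro k
    have hcont : Continuous (fun t : ℂ => sb (CC m t) x y k) := by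
      have hrw : (fun t : ℂ => sb (CC m t) x y k)
          = fun t => ∑ a, ∑ b, coefC m a b k * t^(expoC m a b k) * (x a * y b) := by
        funext t
        rw [sb_apply]
        exact Finset.sum_congr rfl fun a _ => Finset.sum_congr rfl fun b _ => by
          rw [CC]
      rw [hrw]
      exact continuous_finset_sum _ fun a _ => continuous_finset_sum _ fun b _ =>
        ((continuous_const.mul (continuous_pow _)).mul continuous_const)
    exact (hcont.tendsto 0).mono_left nhdsWithin_le_nhds
  · -- zero bracket
    simp only [LinearMap.zero_apply, map_zero]
    exact tendsto_const_nhds
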